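/- Let F : A ⥤ B be a functor and let P_F be its iso-comma category with projections p : P_F ⥤ A and q : P_F ⥤ B. Then: (1) q is an isofibration; (2) the functor r : A ⥤ P_F sending a to (a, F.obj a, identity isomorphism) is an equivalence of categories and satisfies q ∘ r = F; (3) consequently, F is an equivalence of categories if and only if q is a surjective equivalence, i.e. both an equivalence of categories and an isofibration. -/

import Mathlib

open CategoryTheory CategoryTheory.Limits

universe v₁ v₂ u₁ u₂

variable {A : Type u₁} [Category.{v₁} A] {B : Type u₂} [Category.{v₂} B]

/-- A functor is an isofibration if every isomorphism whose domain is in the image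
can be lifted. -/
def Isofibration (F : A ⥤ B) : Prop :=
  ∀ (a : A) (b : B) (β : F.obj a ≅ b),
    ∃ (a' : A) (α : a ≅ a') (h : F.obj a' = b), F.mapIso α ≪≫ eqToIso h = β

/-- The iso-comma category of a functor `F : A ⥤ B`: objects are triples `(a, b, β)` with
`β : F.obj a ≅ b`. -/
abbrev IsoComma (F : A ⥤ B) : Type _ :=
  ObjectProperty.FullSubcategory (fun X : Comma F (𝟭 B) => IsIso X.hom)

namespace IsoComma

variable (F : A ⥤ B)

/-- First projection of the iso-comma category. -/
def p : IsoComma F ⥤ A :=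
  ObjectProperty.ι _ ⋙ Comma.fst F (𝟭 B)

/-- Second projection of the iso-comma category. -/
def q : IsoComma F ⥤ B :=
  ObjectProperty.ι _ ⋙ Comma.snd F (𝟭 B)

/-- The canonical functor `r : A ⥤ P_F` sending `a` to `(a, F.obj a, Iso.refl _)`. -/
def r : A ⥤ IsoComma F where
  obj a := ⟨⟨a, F.obj a, 𝟙 _⟩, inferInstance⟩
  map {a a'} u := ObjectProperty.homMk (show (⟨a, F.obj a, 𝟙 _⟩ : Comma F (𝟭 B)) ⟶ ⟨a', F.obj a', 𝟙 _⟩ from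
    { left := u
      right := F.map u })

lemma q_isofibration : Isofibration (q F) := by
  rintro ⟨⟨a, b, f⟩, hf⟩ b' β
  haveI : IsIso f := hf
  refine ⟨⟨⟨a, b', f ≫ β.hom⟩, (show IsIso (f ≫ β.hom) from (asIso f ≪≫ β).isIso_hom)⟩,
    { hom := ObjectProperty.homMk (show (⟨a, b, f⟩ : Comma F (𝟭 B)) ⟶ ⟨a, b', f ≫ β.hom⟩ from
        { left := 𝟙 a, right := β.hom, w := by simp; rfl })
      inv := ObjectProperty.homMk (show (⟨a, b', f ≫ β.hom⟩ : Comma F (𝟭 B)) ⟶ ⟨a, b, f⟩ from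
        { left := 𝟙 a, right := β.inv, w := by simp; erw [Category.assoc, β.hom_inv_id, Category.comp_id] })
      hom_inv_id := by apply ObjectProperty.hom_ext; apply CommaMorphism.ext <;> simp [r] <;> exact β.hom_inv_id
      inv_hom_id := by apply ObjectProperty.hom_ext; apply CommaMorphism.ext <;> simp [r] <;> exact β.inv_hom_id }, rfl, ?_⟩
  apply Iso.ext
  simp [q]
  exact Category.comp_id _

instance r_faithful : (r F).Faithful where
  map_injective h := congrArg (fun m => CommaMorphism.left m.hom) h

instance r_full : (r F).Full where
  map_surjective {a a'} m := by
    refine ⟨m.hom.left, ?_⟩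
    have hw : F.map m.hom.left ≫ 𝟙 _ = _ ≫ (𝟭 B).map m.hom.right := m.hom.w
    dsimp only [r] at hw
    simp at hw
    apply ObjectProperty.hom_ext
    apply CommaMorphism.ext
    · rfl
    · exact hw

instance r_essSurj : (r F).EssSurj where
  mem_essImage := by
    rintro ⟨⟨a, b, f⟩, hf⟩
    haveI : IsIso f := hf
    refine ⟨a, ⟨{
      hom := ObjectProperty.homMk (show (⟨a, F.obj a, 𝟙 _⟩ : Comma F (𝟭 B)) ⟶ ⟨a, b, f⟩ from
        { left := 𝟙 a, right := f, w := by simp })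
      inv := ObjectProperty.homMk (show (⟨a, b, f⟩ : Comma F (𝟭 B)) ⟶ ⟨a, F.obj a, 𝟙 _⟩ from
        { left := 𝟙 a, right := inv f, w := by simp })
      hom_inv_id := by apply ObjectProperty.hom_ext; apply CommaMorphism.ext <;> simp [r]
      inv_hom_id := by apply ObjectProperty.hom_ext; apply CommaMorphism.ext <;> simp [r] }⟩⟩

instance r_isEquivalence : (r F).IsEquivalence where

lemma r_comp_q : r F ⋙ q F = F := rfl

end IsoComma

/-- For a functor `F : A ⥤ B` with iso-comma category `P_F`: (1) the second projection
`q : P_F ⥤ B` is an isofibration; (2) the canonical functor `r : A ⥤ P_F` is an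
equivalence of categories with `r ⋙ q = F`; (3) hence `F` is an equivalence of categories
if and only if `q` is a surjective equivalence, i.e. both an equivalence and an
isofibration. -/
theorem isoComma_q_isofibration_and_equivalence_criterion (F : A ⥤ B) :
    Isofibration (IsoComma.q F) ∧
    (IsoComma.r F).IsEquivalence ∧
    IsoComma.r F ⋙ IsoComma.q F = F ∧
    (F.IsEquivalence ↔ ((IsoComma.q F).IsEquivalence ∧ Isofibration (IsoComma.q F))) := by
  refine ⟨IsoComma.q_isofibration F, inferInstance, IsoComma.r_comp_q F, ?_, ?_⟩
  · intro hF
    refine ⟨?_, IsoComma.q_isofibration F⟩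
    have : (IsoComma.r F ⋙ IsoComma.q F).IsEquivalence := by
      rw [IsoComma.r_comp_q]; exact hF
    exact Functor.isEquivalence_of_comp_left (IsoComma.r F) (IsoComma.q F)
  · rintro ⟨hq, -⟩
    rw [← IsoComma.r_comp_q F]
    exact Functor.isEquivalence_trans _ _
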